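/- Let l ≥ 1 be an integer, δ ∈ k, and H̃ = X^{l+1} + δ·X^{2l+1}. (a) For every c₁ ∈ k with c₁^l = 1 and every c ∈ k there exists a unique Φ ∈ k⟦X⟧ with constant coefficient 0, coefficient of X equal to c₁, and coefficient of X^{l+1} equal to c, such that H̃∘Φ = Φ′·H̃; moreover every order-1 solution of H̃∘Φ = Φ′·H̃ has (coefficient of X)^l = 1. (b) Any two order-1 solutions Φ₁, Φ₂ of H̃∘Φ = Φ′·H̃ commute: Φ₁∘Φ₂ = Φ₂∘Φ₁. -/

import Mathlib

open PowerSeries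
open Finset

set_option linter.unusedSectionVars false
set_option maxHeartbeats 1000000

variable {k : Type*} [Field k] [CharZero k]

lemma coeff_derivativeFun' (f : PowerSeries k) (n : ℕ) :
    coeff n (derivativeFun f) = coeff (n + 1) f * (n + 1) :=
  coeff_derivative f n

lemma coeff_pow_zero_of_lt {g : PowerSeries k} (hg : constantCoeff g = 0)
    {m n : ℕ} (h : m < n) : coeff m (g ^ n) = 0 :=
  PowerSeries.X_pow_dvd_iff.mp (pow_dvd_pow_of_dvd (PowerSeries.X_dvd_iff.mpr hg) n) m h

lemma coeff_mul_zero_of_lt {f g : PowerSeries k} {a b m : ℕ}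
    (hf : ∀ i < a, coeff i f = 0) (hg : ∀ j < b, coeff j g = 0)
    (h : m < a + b) : coeff m (f * g) = 0 := by
  rw [PowerSeries.coeff_mul]
  apply Finset.sum_eq_zero
  rintro ⟨i, j⟩ hij
  rw [Finset.HasAntidiagonal.mem_antidiagonal] at hij
  rcases lt_or_ge i a with hi | hi
  · rw [hf i hi, zero_mul]
  · have : j < b := by omega
    rw [hg j this, mul_zero]

lemma coeff_mul_exact {f g : PowerSeries k} {a b : ℕ}
    (hf : ∀ i < a, coeff i f = 0) (hg : ∀ j < b, coeff j g = 0) :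
    coeff (a + b) (f * g) = coeff a f * coeff b g := by
  rw [PowerSeries.coeff_mul]
  apply Finset.sum_eq_single (a, b)
  · rintro ⟨i, j⟩ hij hne
    rw [Finset.HasAntidiagonal.mem_antidiagonal] at hij
    rcases lt_or_ge i a with hi | hi
    · rw [hf i hi, zero_mul]
    · have hij2 : i ≠ a ∨ j ≠ b := by
        by_contra hc
        push_neg at hc
        exact hne (by rw [hc.1, hc.2])
      have : j < b := by omega
      rw [hg j this, mul_zero]
  · intro h
    exact absurd (Finset.HasAntidiagonal.mem_antidiagonal.mpr (rfl : (a,b).1 + (a,b).2 = a + b)) h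

lemma coeff_pow_self {g : PowerSeries k} (hg : constantCoeff g = 0) (n : ℕ) :
    coeff n (g ^ n) = (coeff 1 g) ^ n := by
  induction n with
  | zero => simp
  | succ n ih =>
      rw [pow_succ, pow_succ, ← ih]
      have := coeff_mul_exact (f := g ^ n) (g := g) (a := n) (b := 1)
        (fun i hi => coeff_pow_zero_of_lt hg hi)
        (fun j hj => by interval_cases j; simpa using hg)
      simpa using this

/-- Substitution of `g` (with zero constant coefficient) into `f`. -/
noncomputable def comp (f g : PowerSeries k) : PowerSeries k :=
  PowerSeries.mk fun m => ∑ n ∈ Finset.range (m + 1),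
    PowerSeries.coeff n f * PowerSeries.coeff m (g ^ n)

lemma coeff_comp (f g : PowerSeries k) (hg : constantCoeff g = 0) {m M : ℕ} (hM : m < M) :
    coeff m (comp f g) = ∑ n ∈ range M, coeff n f * coeff m (g ^ n) := by
  rw [comp, coeff_mk]
  apply Finset.sum_subset (Finset.range_subset_range.mpr hM)
  intro n hn hn'
  rw [mem_range] at hn hn'
  rw [coeff_pow_zero_of_lt hg (by omega), mul_zero]

lemma sum_range_antidiag (N : ℕ) (F : ℕ → ℕ → k) (hF : ∀ i j, N ≤ i + j → F i j = 0) :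
    ∑ n ∈ range N, ∑ p ∈ antidiagonal n, F p.1 p.2
      = ∑ i ∈ range N, ∑ j ∈ range N, F i j := by
  rw [Finset.sum_sigma', ← Finset.sum_product']
  have h1 : ∑ p ∈ range N ×ˢ range N, F p.1 p.2
      = ∑ p ∈ (range N ×ˢ range N).filter (fun p => p.1 + p.2 < N), F p.1 p.2 := by
    symm
    apply Finset.sum_subset (Finset.filter_subset _ _)
    intro p hmem hp
    rw [Finset.mem_filter, not_and] at hp
    exact hF p.1 p.2 (Nat.le_of_not_lt (hp hmem))
  rw [h1]
  apply Finset.sum_nbij' (i := fun (x : Σ _ : ℕ, ℕ × ℕ) => x.2)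
    (j := fun p => (⟨p.1 + p.2, p⟩ : Σ _ : ℕ, ℕ × ℕ))
  · rintro ⟨n, p⟩ hx
    simp only [Finset.mem_sigma, mem_range, Finset.HasAntidiagonal.mem_antidiagonal] at hx
    simp only [Finset.mem_filter, Finset.mem_product, mem_range]
    omega
  · rintro p hp
    simp only [Finset.mem_filter, Finset.mem_product, mem_range] at hp
    exact Finset.mem_sigma.mpr ⟨mem_range.mpr ((by omega : p.1 + p.2 < N) : _), Finset.HasAntidiagonal.mem_antidiagonal.mpr rfl⟩
  · rintro ⟨n, p⟩ hx
    simp only [Finset.mem_sigma, mem_range, Finset.HasAntidiagonal.mem_antidiagonal] at hx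
    simp [hx.2]
  · rintro p hp
    rfl
  · rintro ⟨n, p⟩ hx
    rfl

lemma comp_mul (f h g : PowerSeries k) (hg : constantCoeff g = 0) :
    comp (f * h) g = comp f g * comp h g := by
  ext m
  rw [PowerSeries.coeff_mul]
  have hrhs : ∑ p ∈ antidiagonal m, coeff p.1 (comp f g) * coeff p.2 (comp h g)
      = ∑ i ∈ range (m+1), ∑ j ∈ range (m+1),
          coeff i f * coeff j h * coeff m (g ^ (i + j)) := by
    have step : ∀ p ∈ antidiagonal m,
        coeff p.1 (comp f g) * coeff p.2 (comp h g)
        = ∑ i ∈ range (m+1), ∑ j ∈ range (m+1),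
            coeff i f * coeff j h * (coeff p.1 (g ^ i) * coeff p.2 (g ^ j)) := by
      rintro ⟨a, b⟩ hab
      rw [Finset.HasAntidiagonal.mem_antidiagonal] at hab
      rw [coeff_comp f g hg (show a < m+1 by omega), coeff_comp h g hg (show b < m+1 by omega),
        Finset.sum_mul_sum]
      apply Finset.sum_congr rfl; intro i _
      apply Finset.sum_congr rfl; intro j _
      ring
    rw [Finset.sum_congr rfl step, Finset.sum_comm]
    apply Finset.sum_congr rfl; intro i _
    rw [Finset.sum_comm]
    apply Finset.sum_congr rfl; intro j _
    rw [← Finset.mul_sum]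
    congr 1
    rw [pow_add, PowerSeries.coeff_mul]
  rw [hrhs]
  rw [coeff_comp (f * h) g hg (Nat.lt_succ_self m)]
  have step2 : ∀ n ∈ range (m+1), coeff n (f * h) * coeff m (g ^ n)
      = ∑ p ∈ antidiagonal n, coeff p.1 f * coeff p.2 h * coeff m (g ^ (p.1 + p.2)) := by
    intro n _
    rw [PowerSeries.coeff_mul, Finset.sum_mul]
    apply Finset.sum_congr rfl
    rintro ⟨i, j⟩ hij
    rw [Finset.HasAntidiagonal.mem_antidiagonal] at hij
    simp only
    rw [hij]
  rw [Finset.sum_congr rfl step2]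
  exact sum_range_antidiag (m+1) (fun i j => coeff i f * coeff j h * coeff m (g ^ (i+j)))
    (fun i j hij => by
      show coeff i f * coeff j h * coeff m (g ^ (i+j)) = 0
      rw [coeff_pow_zero_of_lt hg (by omega), mul_zero])

lemma comp_one (g : PowerSeries k) : comp (1 : PowerSeries k) g = 1 := by
  ext m
  rw [comp, coeff_mk]
  rw [Finset.sum_eq_single 0]
  · simp
  · intro n _ hn
    rw [PowerSeries.coeff_one]
    simp [hn]
  · intro h; exact absurd (Finset.mem_range.mpr (by omega)) h

lemma comp_pow (f g : PowerSeries k) (hg : constantCoeff g = 0) (p : ℕ) :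
    comp (f ^ p) g = (comp f g) ^ p := by
  induction p with
  | zero => simpa using comp_one g
  | succ p ih => rw [pow_succ, pow_succ, comp_mul _ _ _ hg, ih]

lemma comp_add (f h g : PowerSeries k) : comp (f + h) g = comp f g + comp h g := by
  ext m
  simp [comp, coeff_mk, add_mul, Finset.sum_add_distrib]

lemma comp_C_mul (a : k) (f g : PowerSeries k) : comp (C a * f) g = C a * comp f g := by
  ext m
  simp [comp, coeff_mk, Finset.mul_sum, mul_assoc]

lemma derivativeFun_pow (g : PowerSeries k) (n : ℕ) :
    derivativeFun (g ^ (n + 1)) = C ((n : k) + 1) * (g ^ n * derivativeFun g) := by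
  have h := Derivation.leibniz_pow (PowerSeries.derivative k) g (n+1)
  simp only [Nat.add_sub_cancel] at h
  rw [show derivativeFun (g ^ (n+1)) = (PowerSeries.derivative k) (g ^ (n+1)) from rfl, h,
    nsmul_eq_mul, smul_eq_mul, ← map_natCast C (n+1),
    show (((n+1:ℕ)):k) = (n:k)+1 by push_cast; ring]
  rfl

lemma derivativeFun_comp (f g : PowerSeries k) (hg : constantCoeff g = 0) :
    derivativeFun (comp f g) = comp (derivativeFun f) g * derivativeFun g := by
  ext m
  rw [coeff_derivativeFun', coeff_comp f g hg (Nat.lt_succ_self (m+1)), Finset.sum_mul,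
    PowerSeries.coeff_mul]
  have hrhs : ∑ p ∈ antidiagonal m, coeff p.1 (comp (derivativeFun f) g) * coeff p.2 (derivativeFun g)
      = ∑ n ∈ range (m+1), coeff (n+1) f * ((n : k) + 1) * coeff m (g ^ n * derivativeFun g) := by
    have step : ∀ p ∈ antidiagonal m,
        coeff p.1 (comp (derivativeFun f) g) * coeff p.2 (derivativeFun g)
        = ∑ n ∈ range (m+1), coeff (n+1) f * ((n : k)+1) * (coeff p.1 (g^n) * coeff p.2 (derivativeFun g)) := by
      rintro ⟨a, b⟩ hab
      rw [Finset.HasAntidiagonal.mem_antidiagonal] at hab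
      rw [coeff_comp (derivativeFun f) g hg (show a < m+1 by omega), Finset.sum_mul]
      apply Finset.sum_congr rfl; intro n _
      rw [coeff_derivativeFun']
      push_cast
      ring
    rw [Finset.sum_congr rfl step, Finset.sum_comm]
    apply Finset.sum_congr rfl; intro n _
    rw [← Finset.mul_sum, PowerSeries.coeff_mul]
  rw [hrhs]
  -- LHS: ∑ n ∈ range (m+2), coeff n f * coeff (m+1) (g^n) * (m+1)
  rw [Finset.sum_range_succ']
  -- gives ∑ i ∈ range (m+1), F (i+1) + F 0
  have h0 : coeff 0 f * coeff (m+1) (g ^ 0) * ((m:k) + 1) = 0 := by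
    simp [PowerSeries.coeff_one]
  rw [h0, add_zero]
  apply Finset.sum_congr rfl
  intro n _
  have hd : coeff (m+1) (g ^ (n+1)) * ((m:k)+1) = coeff m (derivativeFun (g ^ (n+1))) := by
    rw [coeff_derivativeFun']
  calc coeff (n+1) f * coeff (m+1) (g ^ (n+1)) * ((m:k)+1)
      = coeff (n+1) f * (coeff (m+1) (g ^ (n+1)) * ((m:k)+1)) := by ring
    _ = coeff (n+1) f * coeff m (derivativeFun (g ^ (n+1))) := by rw [hd]
    _ = coeff (n+1) f * ((n:k)+1) * coeff m (g ^ n * derivativeFun g) := by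
        rw [derivativeFun_pow, PowerSeries.coeff_C_mul]
        ring

/-- The normal form generator. -/
noncomputable def Htilde (l : ℕ) (δ : k) : PowerSeries k :=
  X ^ (l + 1) + C δ * X ^ (2 * l + 1)

lemma coeff_Htilde (l : ℕ) (δ : k) (j : ℕ) :
    coeff j (Htilde l δ) = (if j = l + 1 then 1 else 0) + δ * (if j = 2 * l + 1 then 1 else 0) := by
  simp [Htilde, PowerSeries.coeff_X_pow, map_add]

noncomputable def Ee (l : ℕ) (δ : k) (Φ : PowerSeries k) : PowerSeries k :=
  comp (Htilde l δ) Φ - derivativeFun Φ * Htilde l δ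

lemma comp_Htilde (l : ℕ) (hl : 1 ≤ l) (δ : k) (Φ : PowerSeries k)
    (hΦ : constantCoeff Φ = 0) :
    comp (Htilde l δ) Φ = Φ ^ (l + 1) + C δ * Φ ^ (2 * l + 1) := by
  ext m
  rw [coeff_comp _ _ hΦ (show m < m + (2*l+2) by omega)]
  have step : ∀ n ∈ range (m + (2*l+2)), coeff n (Htilde l δ) * coeff m (Φ ^ n)
      = (if n = l+1 then coeff m (Φ ^ (l+1)) else 0)
        + (if n = 2*l+1 then δ * coeff m (Φ ^ (2*l+1)) else 0) := by
    intro n _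
    rw [coeff_Htilde]
    split_ifs with h1 h2 h2
    · omega
    · subst h1; ring
    · subst h2; ring
    · ring
  rw [Finset.sum_congr rfl step, Finset.sum_add_distrib,
    Finset.sum_ite_eq' (range (m + (2*l+2))) (l+1) (fun _ => coeff m (Φ ^ (l+1))),
    Finset.sum_ite_eq' (range (m + (2*l+2))) (2*l+1) (fun _ => δ * coeff m (Φ ^ (2*l+1))),
    if_pos (Finset.mem_range.mpr (by omega)), if_pos (Finset.mem_range.mpr (by omega)),
    map_add, PowerSeries.coeff_C_mul]

lemma derivativeFun_sub (f g : PowerSeries k) :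
    derivativeFun (f - g) = derivativeFun f - derivativeFun g := by
  ext m
  simp [coeff_derivativeFun', map_sub, sub_mul]

lemma coeff_pow_mul_pow {f g : PowerSeries k} (hf : constantCoeff f = 0)
    (hg : constantCoeff g = 0) (i j : ℕ) :
    coeff (i + j) (f ^ i * g ^ j) = (coeff 1 f) ^ i * (coeff 1 g) ^ j := by
  rw [coeff_mul_exact (fun a ha => coeff_pow_zero_of_lt hf ha)
    (fun b hb => coeff_pow_zero_of_lt hg hb), coeff_pow_self hf, coeff_pow_self hg]

lemma coeff_geomS {Ψ Ψ' : PowerSeries k} (h0 : constantCoeff Ψ = 0)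
    (h0' : constantCoeff Ψ' = 0) (p : ℕ) :
    ∀ j < p, coeff j (∑ i ∈ range (p + 1), Ψ ^ i * Ψ' ^ (p - i)) = 0 := by
  intro j hj
  rw [map_sum]
  apply Finset.sum_eq_zero
  intro i hi
  rw [mem_range] at hi
  exact coeff_mul_zero_of_lt (fun a ha => coeff_pow_zero_of_lt h0 ha)
    (fun b hb => coeff_pow_zero_of_lt h0' hb) (by omega)

lemma key (l : ℕ) (hl : 1 ≤ l) (δ : k) (Ψ Ψ' : PowerSeries k)
    (h0 : constantCoeff Ψ = 0) (h0' : constantCoeff Ψ' = 0)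
    (n : ℕ) (hn : 2 ≤ n) (hagree : ∀ j < n, coeff j Ψ = coeff j Ψ')
    (m : ℕ) (hm1 : 1 ≤ m) (hmn : m ≤ n) :
    coeff (m + l) (Ee l δ Ψ) - coeff (m + l) (Ee l δ Ψ') =
      (if m = n then (((l : k) + 1) * (coeff 1 Ψ) ^ l - (n : k)) * (coeff n Ψ - coeff n Ψ')
       else 0) := by
  set D := Ψ - Ψ' with hDdef
  have hD : ∀ j < n, coeff j D = 0 := fun j hj => by
    rw [hDdef, map_sub, hagree j hj, sub_self]
  have hdiff : Ee l δ Ψ - Ee l δ Ψ'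
      = (Ψ ^ (l+1) - Ψ' ^ (l+1)) + C δ * (Ψ ^ (2*l+1) - Ψ' ^ (2*l+1))
        - derivativeFun D * Htilde l δ := by
    rw [Ee, Ee, comp_Htilde l hl δ Ψ h0, comp_Htilde l hl δ Ψ' h0',
      hDdef, derivativeFun_sub]
    ring
  have hA : coeff (m + l) (Ψ ^ (l+1) - Ψ' ^ (l+1))
      = (if m = n then ((l : k) + 1) * (coeff 1 Ψ) ^ l * coeff n D else 0) := by
    rw [← geom_sum₂_mul Ψ Ψ' (l+1)]
    have hS := coeff_geomS h0 h0' l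
    have hSsum : ∀ i, (l + 1) - 1 - i = l - i := by omega
    by_cases hmn' : m = n
    · subst hmn'
      rw [show m + l = l + m by ring]
      rw [coeff_mul_exact (by simpa [hSsum] using hS) (fun b hb => hD b hb), if_pos rfl]
      congr 1
      rw [map_sum]
      have : ∀ i ∈ range (l + 1), coeff l (Ψ ^ i * Ψ' ^ ((l+1) - 1 - i))
          = (coeff 1 Ψ) ^ l := by
        intro i hi
        rw [mem_range] at hi
        have hp := coeff_pow_mul_pow h0 h0' i (l - i)
        rw [show i + (l - i) = l by omega] at hp
        rw [hSsum i, hp, ← hagree 1 (by omega), ← pow_add, show i + (l - i) = l by omega]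
      rw [Finset.sum_congr rfl this, Finset.sum_const, Finset.card_range, nsmul_eq_mul]
      push_cast
      ring
    · rw [if_neg hmn']
      exact coeff_mul_zero_of_lt (by simpa [hSsum] using hS) (fun b hb => hD b hb) (by omega)
  have hB : coeff (m + l) (Ψ ^ (2*l+1) - Ψ' ^ (2*l+1)) = 0 := by
    rw [← geom_sum₂_mul Ψ Ψ' (2*l+1)]
    have hS := coeff_geomS h0 h0' (2*l)
    have hSsum : ∀ i, (2*l + 1) - 1 - i = 2*l - i := by omega
    exact coeff_mul_zero_of_lt (by simpa [hSsum] using hS) (fun b hb => hD b hb) (by omega)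
  have hC : coeff (m + l) (derivativeFun D * Htilde l δ)
      = (m : k) * coeff m D := by
    obtain ⟨m', rfl⟩ : ∃ m', m = m' + 1 := ⟨m - 1, by omega⟩
    rw [PowerSeries.coeff_mul]
    rw [Finset.sum_eq_single (m', l + 1)]
    · rw [coeff_derivativeFun', coeff_Htilde, if_pos rfl, if_neg (by omega)]
      push_cast
      ring
    · rintro ⟨a, b⟩ hab hne
      rw [Finset.HasAntidiagonal.mem_antidiagonal] at hab
      rw [coeff_Htilde]
      by_cases hb1 : b = l + 1
      · refine absurd ?_ hne
        have ha : a = m' := by omega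
        rw [ha, hb1]
      by_cases hb2 : b = 2*l + 1
      · have hz : coeff (a+1) D = 0 := hD (a+1) (by omega)
        rw [if_neg hb1, if_pos hb2, coeff_derivativeFun', hz]
        ring
      · rw [if_neg hb1, if_neg hb2]
        ring
    · intro h
      exact absurd (Finset.HasAntidiagonal.mem_antidiagonal.mpr
        (show (m', l + 1).1 + (m', l + 1).2 = m' + 1 + l by simp; omega)) h
  have this' : coeff (m + l) (Ee l δ Ψ) - coeff (m + l) (Ee l δ Ψ')
      = coeff (m + l) (Ψ ^ (l+1) - Ψ' ^ (l+1))
        + δ * coeff (m + l) (Ψ ^ (2*l+1) - Ψ' ^ (2*l+1))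
        - coeff (m + l) (derivativeFun D * Htilde l δ) := by
    rw [← map_sub (coeff (m + l)), hdiff, map_sub, map_add, PowerSeries.coeff_C_mul]
  rw [hB, mul_zero, add_zero, hA, hC] at this'
  rw [this']
  by_cases hmn' : m = n
  · subst hmn'
    rw [if_pos rfl, if_pos rfl, hDdef, map_sub]
    ring
  · rw [if_neg hmn', if_neg hmn', hD m (by omega), mul_zero, sub_zero]

lemma coeff_Ee_low (l : ℕ) (hl : 1 ≤ l) (δ : k) (Φ : PowerSeries k)
    (hΦ : constantCoeff Φ = 0) {j : ℕ} (hj : j ≤ l) :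
    coeff j (Ee l δ Φ) = 0 := by
  rw [Ee, comp_Htilde l hl δ Φ hΦ, map_sub, map_add, PowerSeries.coeff_C_mul,
    coeff_pow_zero_of_lt hΦ (by omega), coeff_pow_zero_of_lt hΦ (by omega),
    coeff_mul_zero_of_lt (f := derivativeFun Φ) (a := 0) (b := l + 1)
      (fun i hi => absurd hi (Nat.not_lt_zero i))
      (fun b hb => by rw [coeff_Htilde, if_neg (by omega), if_neg (by omega)]; ring)
      (by omega)]
  ring

lemma root_of_unity (l : ℕ) (hl : 1 ≤ l) (δ : k) (Φ : PowerSeries k)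
    (hΦ : constantCoeff Φ = 0) (h1 : coeff 1 Φ ≠ 0)
    (hE : Ee l δ Φ = 0) : (coeff 1 Φ) ^ l = 1 := by
  have h := congrArg (fun x => coeff (l + 1) x) hE
  simp only [map_zero] at h
  rw [Ee, comp_Htilde l hl δ Φ hΦ, map_sub, map_add, PowerSeries.coeff_C_mul,
    coeff_pow_self hΦ, coeff_pow_zero_of_lt hΦ (by omega), mul_zero, add_zero] at h
  have hmul : coeff (l+1) (derivativeFun Φ * Htilde l δ) = coeff 1 Φ := by
    rw [PowerSeries.coeff_mul, Finset.sum_eq_single (0, l+1)]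
    · rw [coeff_derivativeFun', coeff_Htilde, if_pos rfl, if_neg (by omega)]
      push_cast
      ring
    · rintro ⟨a, b⟩ hab hne
      rw [Finset.HasAntidiagonal.mem_antidiagonal] at hab
      rw [coeff_Htilde]
      by_cases hb1 : b = l + 1
      · refine absurd ?_ hne
        have ha : a = 0 := by omega
        rw [ha, hb1]
      · rw [if_neg hb1, if_neg (by omega)]
        ring
    · intro h'
      exact absurd (Finset.HasAntidiagonal.mem_antidiagonal.mpr
        (show (0, l+1).1 + (0, l+1).2 = l + 1 by simp)) h'
  rw [hmul, sub_eq_zero] at h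
  have : coeff 1 Φ * ((coeff 1 Φ) ^ l - 1) = 0 := by
    rw [mul_sub, mul_one, mul_comm, ← pow_succ]
    rw [show l + 1 = l.succ from rfl] at h
    rw [h, sub_self]
  rcases mul_eq_zero.mp this with h' | h'
  · exact absurd h' h1
  · exact sub_eq_zero.mp h'

lemma Ee_linear (l : ℕ) (hl : 1 ≤ l) (δ : k) (c₁ : k) (hc : c₁ ^ l = 1) :
    Ee l δ (C c₁ * X) = 0 := by
  have h0 : constantCoeff (C c₁ * X : PowerSeries k) = 0 := by simp
  have hd : derivativeFun (C c₁ * X : PowerSeries k) = C c₁ := by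
    ext m
    rw [coeff_derivativeFun', PowerSeries.coeff_C_mul, PowerSeries.coeff_X]
    by_cases hm : m = 0
    · subst hm; simp [PowerSeries.coeff_C]
    · rw [if_neg (by omega), PowerSeries.coeff_C, if_neg hm]; ring
  have hp : ∀ p : ℕ, c₁ ^ p = c₁ → (C c₁ * X : PowerSeries k) ^ p = C c₁ * X ^ p := by
    intro p hcp
    rw [mul_pow, ← map_pow, hcp]
  rw [Ee, comp_Htilde l hl δ _ h0, hd,
    hp (l+1) (by rw [pow_succ, hc, one_mul]),
    hp (2*l+1) (by rw [show 2*l+1 = l + l + 1 by ring, pow_add, pow_add, hc, pow_one]; ring),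
    Htilde]
  ring

lemma master (l : ℕ) (hl : 1 ≤ l) (δ : k) (Φ Ψ : PowerSeries k)
    (hΦ0 : constantCoeff Φ = 0) (hΨ0 : constantCoeff Ψ = 0)
    (hEΦ : Ee l δ Φ = 0) (hEΨ : Ee l δ Ψ = 0)
    (h1 : coeff 1 Φ = coeff 1 Ψ) (hpow : (coeff 1 Φ) ^ l = 1)
    (N : ℕ) (hN : ∀ n, 2 ≤ n → n ≤ N → n = l + 1 → coeff n Φ = coeff n Ψ) :
    ∀ n ≤ N, coeff n Φ = coeff n Ψ := by
  intro n
  induction n using Nat.strong_induction_on with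
  | _ n ih =>
    intro hnN
    match n, hnN with
    | 0, _ => rw [← coeff_zero_eq_constantCoeff_apply] at hΦ0 hΨ0; rw [hΦ0, hΨ0]
    | 1, _ => exact h1
    | (n+2), hnN =>
      by_cases hsp : n + 2 = l + 1
      · exact hN (n+2) (by omega) hnN hsp
      · have hagree : ∀ j < n + 2, coeff j Φ = coeff j Ψ :=
          fun j hj => ih j hj (by omega)
        have hk := key l hl δ Φ Ψ hΦ0 hΨ0 (n+2) (by omega) hagree (n+2) (by omega) le_rfl
        rw [hEΦ, hEΨ, map_zero, sub_self, if_pos rfl, hpow, mul_one] at hk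
        have hfac : ((l : k) + 1) - ((n : k) + 2) ≠ 0 := by
          intro hz
          have : ((l + 1 : ℕ) : k) = ((n + 2 : ℕ) : k) := by push_cast; linear_combination hz
          exact hsp (Nat.cast_injective this).symm
        have := (mul_eq_zero.mp hk.symm).resolve_left (by push_cast at hfac ⊢; exact hfac)
        linear_combination this

noncomputable def Pseq (l : ℕ) (δ c₁ c : k) : ℕ → PowerSeries k
  | 0 => 0
  | n + 1 => Pseq l δ c₁ c n + C (
      if n + 1 = 1 then c₁ else if n + 1 = l + 1 then c
      else coeff (n + 1 + l) (Ee l δ (Pseq l δ c₁ c n)) / (((n : k) + 1) - ((l : k) + 1)))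
      * X ^ (n + 1)

variable (l : ℕ) (δ c₁ c : k)

lemma Pseq_coeff_high : ∀ n, ∀ j, n < j → coeff j (Pseq l δ c₁ c n) = 0 := by
  intro n
  induction n with
  | zero => intro j _; simp [Pseq]
  | succ n ih =>
      intro j hj
      rw [Pseq, map_add, PowerSeries.coeff_C_mul, PowerSeries.coeff_X_pow,
        if_neg (show ¬ j = n + 1 by omega), ih j (by omega)]
      ring

lemma Pseq_coeff_stable : ∀ n, ∀ j ≤ n, coeff j (Pseq l δ c₁ c (n+1)) = coeff j (Pseq l δ c₁ c n) := by
  intro n j hj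
  rw [show Pseq l δ c₁ c (n+1) = Pseq l δ c₁ c n + C (
      if n + 1 = 1 then c₁ else if n + 1 = l + 1 then c
      else coeff (n + 1 + l) (Ee l δ (Pseq l δ c₁ c n)) / (((n : k) + 1) - ((l : k) + 1)))
      * X ^ (n + 1) from rfl,
    map_add, PowerSeries.coeff_C_mul, PowerSeries.coeff_X_pow,
    if_neg (show ¬ j = n + 1 by omega)]
  ring

lemma Pseq_coeff_mono : ∀ n n', n ≤ n' → ∀ j ≤ n, coeff j (Pseq l δ c₁ c n') = coeff j (Pseq l δ c₁ c n) := by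
  intro n n' h
  induction n' with
  | zero => intro j hj; rw [show n = 0 by omega]
  | succ n' ih =>
      intro j hj
      by_cases hc' : n = n' + 1
      · rw [hc']
      · rw [Pseq_coeff_stable l δ c₁ c n' j (by omega), ih (by omega) j hj]

lemma Pseq_const : ∀ n, constantCoeff (Pseq l δ c₁ c n) = 0 := by
  intro n
  rw [← coeff_zero_eq_constantCoeff_apply]
  induction n with
  | zero => simp [Pseq]
  | succ n ih => rw [Pseq_coeff_stable l δ c₁ c n 0 (by omega), ih]

lemma Pseq_one : Pseq l δ c₁ c 1 = C c₁ * X := by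
  rw [show Pseq l δ c₁ c 1 = Pseq l δ c₁ c 0 + C (
      if 0 + 1 = 1 then c₁ else if 0 + 1 = l + 1 then c
      else coeff (0 + 1 + l) (Ee l δ (Pseq l δ c₁ c 0)) / (((0 : k) + 1) - ((l : k) + 1)))
      * X ^ (0 + 1) from rfl]
  simp [Pseq]

lemma Pseq_coeff_one (n : ℕ) (hn : 1 ≤ n) : coeff 1 (Pseq l δ c₁ c n) = c₁ := by
  rw [Pseq_coeff_mono l δ c₁ c 1 n hn 1 le_rfl, Pseq_one]
  simp [PowerSeries.coeff_C_mul]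

lemma Pseq_low (hl : 1 ≤ l) (hc₁ : c₁ ^ l = 1) :
    ∀ n, 1 ≤ n → n ≤ l → Pseq l δ c₁ c n = C c₁ * X := by
  intro n
  induction n with
  | zero => omega
  | succ n ih =>
      intro _ hn
      by_cases hn1 : n = 0
      · subst hn1; exact Pseq_one l δ c₁ c
      · have hprev : Pseq l δ c₁ c n = C c₁ * X := ih (by omega) (by omega)
        rw [show Pseq l δ c₁ c (n+1) = Pseq l δ c₁ c n + C (
            if n + 1 = 1 then c₁ else if n + 1 = l + 1 then c
            else coeff (n + 1 + l) (Ee l δ (Pseq l δ c₁ c n)) / (((n : k) + 1) - ((l : k) + 1)))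
            * X ^ (n + 1) from rfl,
          if_neg (by omega), if_neg (by omega), hprev, Ee_linear l hl δ c₁ hc₁]
        simp

lemma Pseq_Ee (hl : 1 ≤ l) (hc₁ : c₁ ^ l = 1) :
    ∀ n, 1 ≤ n → ∀ m, 1 ≤ m → m ≤ n → coeff (m + l) (Ee l δ (Pseq l δ c₁ c n)) = 0 := by
  intro n
  induction n with
  | zero => omega
  | succ n ih =>
      intro _ m hm1 hmn
      by_cases hn0 : n = 0
      · subst hn0
        rw [show (0:ℕ)+1 = 1 from rfl, Pseq_one, Ee_linear l hl δ c₁ hc₁, map_zero]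
      have hkey := key l hl δ (Pseq l δ c₁ c (n+1)) (Pseq l δ c₁ c n)
        (Pseq_const l δ c₁ c (n+1)) (Pseq_const l δ c₁ c n) (n+1) (by omega)
        (fun j hj => Pseq_coeff_stable l δ c₁ c n j (by omega)) m hm1 hmn
      by_cases hm : m = n + 1
      · subst hm
        rw [if_pos rfl] at hkey
        rw [Pseq_coeff_one l δ c₁ c (n+1) (by omega), hc₁] at hkey
        have hnew : coeff (n+1) (Pseq l δ c₁ c (n+1))
            = (if n + 1 = 1 then c₁ else if n + 1 = l + 1 then c
              else coeff (n + 1 + l) (Ee l δ (Pseq l δ c₁ c n)) / (((n : k) + 1) - ((l : k) + 1))) := by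
          rw [show Pseq l δ c₁ c (n+1) = Pseq l δ c₁ c n + C (
              if n + 1 = 1 then c₁ else if n + 1 = l + 1 then c
              else coeff (n + 1 + l) (Ee l δ (Pseq l δ c₁ c n)) / (((n : k) + 1) - ((l : k) + 1)))
              * X ^ (n + 1) from rfl,
            map_add, PowerSeries.coeff_C_mul, PowerSeries.coeff_X_pow, if_pos rfl,
            Pseq_coeff_high l δ c₁ c n (n+1) (by omega)]
          ring
        rw [hnew, Pseq_coeff_high l δ c₁ c n (n+1) (by omega), sub_zero,
          if_neg (show ¬ n + 1 = 1 by omega)] at hkey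
        by_cases hsp : n + 1 = l + 1
        · have hP : Pseq l δ c₁ c n = C c₁ * X :=
            Pseq_low l δ c₁ c hl hc₁ n (by omega) (by omega)
          rw [hP, Ee_linear l hl δ c₁ hc₁, map_zero, sub_zero, if_pos hsp] at hkey
          rw [hkey, show ((n+1 : ℕ) : k) = (l:k) + 1 by rw [hsp]; push_cast; ring]
          ring
        · rw [if_neg hsp] at hkey
          have hne : ((n:k) + 1) - ((l:k) + 1) ≠ 0 := by
            intro h0
            have hcast : ((n:ℕ):k) = ((l:ℕ):k) := by linear_combination h0
            exact hsp (by rw [Nat.cast_inj.mp hcast])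
          set e := coeff (n + 1 + l) (Ee l δ (Pseq l δ c₁ c n)) with he
          have hexp : coeff (n+1+l) (Ee l δ (Pseq l δ c₁ c (n+1)))
              = e + (((l:k) + 1) * 1 - ((n+1 : ℕ):k)) * (e / (((n : k) + 1) - ((l : k) + 1))) := by
            linear_combination hkey
          have hd : ((l:k) + 1) * 1 - ((n+1 : ℕ):k) = -((((n : k) + 1) - ((l : k) + 1))) := by
            push_cast; ring
          have hcan : (((n : k) + 1) - ((l : k) + 1)) * (e / (((n : k) + 1) - ((l : k) + 1))) = e := by
            rw [mul_comm, div_mul_cancel₀ _ hne]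
          rw [hexp, hd, neg_mul, hcan]
          ring
      · rw [if_neg hm] at hkey
        rw [ih (by omega) m hm1 (by omega), sub_zero] at hkey
        exact hkey

lemma exists_sol (hl : 1 ≤ l) (hc₁ : c₁ ^ l = 1) :
    ∃ Φ : PowerSeries k, constantCoeff Φ = 0 ∧ coeff 1 Φ = c₁ ∧
      coeff (l+1) Φ = c ∧ Ee l δ Φ = 0 := by
  set Φ : PowerSeries k := mk (fun n => coeff n (Pseq l δ c₁ c n)) with hΦ
  have hco : ∀ j n, j ≤ n → coeff j Φ = coeff j (Pseq l δ c₁ c n) := by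
    intro j n hjn
    rw [hΦ, coeff_mk, Pseq_coeff_mono l δ c₁ c j n hjn j le_rfl]
  have h0 : constantCoeff Φ = 0 := by
    rw [← coeff_zero_eq_constantCoeff_apply, hΦ, coeff_mk]
    simp [Pseq]
  refine ⟨Φ, h0, ?_, ?_, ?_⟩
  · rw [hco 1 1 le_rfl, Pseq_coeff_one l δ c₁ c 1 le_rfl]
  · rw [hco (l+1) (l+1) le_rfl]
    rw [show Pseq l δ c₁ c (l+1) = Pseq l δ c₁ c l + C (
        if l + 1 = 1 then c₁ else if l + 1 = l + 1 then c
        else coeff (l + 1 + l) (Ee l δ (Pseq l δ c₁ c l)) / (((l : k) + 1) - ((l : k) + 1)))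
        * X ^ (l + 1) from rfl,
      map_add, PowerSeries.coeff_C_mul, PowerSeries.coeff_X_pow, if_pos rfl,
      if_neg (show ¬ l + 1 = 1 by omega), if_pos rfl,
      Pseq_coeff_high l δ c₁ c l (l+1) (by omega)]
    ring
  · ext j
    rw [map_zero]
    by_cases hj : j ≤ l
    · exact coeff_Ee_low l hl δ Φ h0 hj
    · obtain ⟨m, rfl⟩ : ∃ m, j = m + l := ⟨j - l, by omega⟩
      have hm1 : 1 ≤ m := by omega
      have hkey := key l hl δ Φ (Pseq l δ c₁ c (m+1)) h0 (Pseq_const l δ c₁ c (m+1))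
        (m+1) (by omega) (fun j' hj' => hco j' (m+1) (by omega)) m hm1 (by omega)
      rw [if_neg (by omega), Pseq_Ee l δ c₁ c hl hc₁ (m+1) (by omega) m hm1 (by omega),
        sub_zero] at hkey
      exact hkey

-- part (b) helpers
lemma coeff_comp_zero (f g : PowerSeries k) (hf : constantCoeff f = 0) :
    constantCoeff (comp f g) = 0 := by
  rw [← coeff_zero_eq_constantCoeff_apply, comp, coeff_mk]
  rw [← coeff_zero_eq_constantCoeff_apply] at hf
  simp [hf]

lemma coeff_comp_one (f g : PowerSeries k) (hf : constantCoeff f = 0)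
    (hg : constantCoeff g = 0) :
    coeff 1 (comp f g) = coeff 1 f * coeff 1 g := by
  rw [coeff_comp f g hg (show (1:ℕ) < 2 by omega)]
  rw [show range 2 = {0, 1} from rfl]
  rw [Finset.sum_insert (by simp), Finset.sum_singleton]
  rw [← coeff_zero_eq_constantCoeff_apply] at hf
  rw [hf, pow_one]
  ring

lemma comp_sol (hl : 1 ≤ l) (Φ₁ Φ₂ : PowerSeries k)
    (h01 : constantCoeff Φ₁ = 0) (h02 : constantCoeff Φ₂ = 0)
    (hE1 : Ee l δ Φ₁ = 0) (hE2 : Ee l δ Φ₂ = 0) :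
    Ee l δ (comp Φ₁ Φ₂) = 0 := by
  have h0c : constantCoeff (comp Φ₁ Φ₂) = 0 := coeff_comp_zero Φ₁ Φ₂ h01
  have hE1' : comp (Htilde l δ) Φ₁ = derivativeFun Φ₁ * Htilde l δ := by
    have := sub_eq_zero.mp hE1
    exact this
  have hE2' : comp (Htilde l δ) Φ₂ = derivativeFun Φ₂ * Htilde l δ := sub_eq_zero.mp hE2
  rw [Ee, sub_eq_zero]
  calc comp (Htilde l δ) (comp Φ₁ Φ₂)
      = (comp Φ₁ Φ₂) ^ (l+1) + C δ * (comp Φ₁ Φ₂) ^ (2*l+1) :=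
        comp_Htilde l hl δ _ h0c
    _ = comp (Φ₁ ^ (l+1) + C δ * Φ₁ ^ (2*l+1)) Φ₂ := by
        rw [comp_add, comp_C_mul, comp_pow _ _ h02, comp_pow _ _ h02]
    _ = comp (comp (Htilde l δ) Φ₁) Φ₂ := by rw [comp_Htilde l hl δ Φ₁ h01]
    _ = comp (derivativeFun Φ₁ * Htilde l δ) Φ₂ := by rw [hE1']
    _ = comp (derivativeFun Φ₁) Φ₂ * comp (Htilde l δ) Φ₂ := comp_mul _ _ _ h02
    _ = comp (derivativeFun Φ₁) Φ₂ * (derivativeFun Φ₂ * Htilde l δ) := by rw [hE2']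
    _ = derivativeFun (comp Φ₁ Φ₂) * Htilde l δ := by
        rw [derivativeFun_comp Φ₁ Φ₂ h02]; ring

lemma mid_vanish (hl : 1 ≤ l) (Φ : PowerSeries k) (h0 : constantCoeff Φ = 0)
    (h1ne : coeff 1 Φ ≠ 0) (hE : Ee l δ Φ = 0) :
    ∀ n, 2 ≤ n → n ≤ l → coeff n Φ = 0 := by
  intro n hn2 hnl
  have hpow := root_of_unity l hl δ Φ h0 h1ne hE
  have hEΨ : Ee l δ (C (coeff 1 Φ) * X) = 0 := Ee_linear l hl δ _ hpow
  have h1 : coeff 1 Φ = coeff 1 (C (coeff 1 Φ) * X) := by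
    simp [PowerSeries.coeff_C_mul]
  have := master l hl δ Φ (C (coeff 1 Φ) * X) h0 (by simp) hE hEΨ h1 hpow l
    (fun n' _ hn' hsp => by omega) n hnl
  rw [this, PowerSeries.coeff_C_mul, PowerSeries.coeff_X, if_neg (by omega)]
  ring

lemma coeff_comp_lp1 (hl : 1 ≤ l) (Φ₁ Φ₂ : PowerSeries k)
    (h01 : constantCoeff Φ₁ = 0) (h02 : constantCoeff Φ₂ = 0)
    (hmid : ∀ n, 2 ≤ n → n ≤ l → coeff n Φ₁ = 0) :
    coeff (l+1) (comp Φ₁ Φ₂)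
      = coeff 1 Φ₁ * coeff (l+1) Φ₂ + coeff (l+1) Φ₁ * (coeff 1 Φ₂) ^ (l+1) := by
  rw [coeff_comp Φ₁ Φ₂ h02 (show l + 1 < l + 2 by omega)]
  have step : ∀ n ∈ range (l+2), coeff n Φ₁ * coeff (l+1) (Φ₂ ^ n)
      = (if n = 1 then coeff 1 Φ₁ * coeff (l+1) Φ₂ else 0)
        + (if n = l+1 then coeff (l+1) Φ₁ * (coeff 1 Φ₂) ^ (l+1) else 0) := by
    intro n hn
    rw [mem_range] at hn
    by_cases h1 : n = 1
    · subst h1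
      rw [if_pos rfl, if_neg (by omega), pow_one]
      ring
    by_cases hlp : n = l + 1
    · subst hlp
      rw [if_neg h1, if_pos rfl, coeff_pow_self h02]
      ring
    rw [if_neg h1, if_neg hlp]
    by_cases hn0 : n = 0
    · subst hn0
      rw [← coeff_zero_eq_constantCoeff_apply] at h01
      rw [h01]
      ring
    · rw [hmid n (by omega) (by omega)]
      ring
  rw [Finset.sum_congr rfl step, Finset.sum_add_distrib,
    Finset.sum_ite_eq' (range (l+2)) 1 (fun _ => coeff 1 Φ₁ * coeff (l+1) Φ₂),
    Finset.sum_ite_eq' (range (l+2)) (l+1) (fun _ => coeff (l+1) Φ₁ * (coeff 1 Φ₂) ^ (l+1)),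
    if_pos (Finset.mem_range.mpr (by omega)), if_pos (Finset.mem_range.mpr (by omega))]

/-- For `H̃ = X^(l+1) + δX^(2l+1)`:
(a) for every `l`-th root of unity `c₁` and every `c ∈ k` there is a unique
solution `Φ = c₁X + … + cX^(l+1) + …` of `H̃∘Φ = Φ′·H̃`, and every order-1
solution has linear coefficient an `l`-th root of unity;
(b) any two order-1 solutions commute. -/
theorem aczel_jabotinsky_normal_form_solutions (l : ℕ) (hl : 1 ≤ l) (δ : k) :
    (∀ c₁ : k, c₁ ^ l = 1 → ∀ c : k, ∃! Φ : PowerSeries k,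
        constantCoeff Φ = 0 ∧ coeff 1 Φ = c₁ ∧ coeff (l + 1) Φ = c ∧
        comp (Htilde l δ) Φ = derivativeFun Φ * Htilde l δ) ∧
    (∀ Φ : PowerSeries k,
        constantCoeff Φ = 0 → coeff 1 Φ ≠ 0 →
        comp (Htilde l δ) Φ = derivativeFun Φ * Htilde l δ →
        (coeff 1 Φ) ^ l = 1) ∧
    (∀ Φ₁ Φ₂ : PowerSeries k,
        constantCoeff Φ₁ = 0 → coeff 1 Φ₁ ≠ 0 →
        constantCoeff Φ₂ = 0 → coeff 1 Φ₂ ≠ 0 →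
        comp (Htilde l δ) Φ₁ = derivativeFun Φ₁ * Htilde l δ →
        comp (Htilde l δ) Φ₂ = derivativeFun Φ₂ * Htilde l δ →
        comp Φ₁ Φ₂ = comp Φ₂ Φ₁) := by
  have hiff : ∀ Φ : PowerSeries k,
      (comp (Htilde l δ) Φ = derivativeFun Φ * Htilde l δ) ↔ Ee l δ Φ = 0 := by
    intro Φ
    rw [Ee, sub_eq_zero]
  refine ⟨?_, ?_, ?_⟩
  · -- part (a)
    intro c₁ hc₁ c
    obtain ⟨Φ, h0, h1, hlp, hE⟩ := exists_sol l δ c₁ c hl hc₁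
    refine ⟨Φ, ⟨h0, h1, hlp, (hiff Φ).mpr hE⟩, ?_⟩
    rintro Ψ ⟨hΨ0, hΨ1, hΨl, hΨeq⟩
    have hEΨ : Ee l δ Ψ = 0 := (hiff Ψ).mp hΨeq
    ext n
    exact master l hl δ Ψ Φ hΨ0 h0 hEΨ hE (hΨ1.trans h1.symm)
      (by rw [hΨ1]; exact hc₁) n
      (fun n' _ _ hsp => by subst hsp; rw [hΨl, hlp]) n le_rfl
  · -- part (a2)
    intro Φ h0 h1 heq
    exact root_of_unity l hl δ Φ h0 h1 ((hiff Φ).mp heq)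
  · -- part (b)
    intro Φ₁ Φ₂ h01 h11 h02 h12 he1 he2
    have hE1 : Ee l δ Φ₁ = 0 := (hiff Φ₁).mp he1
    have hE2 : Ee l δ Φ₂ = 0 := (hiff Φ₂).mp he2
    have r1 := root_of_unity l hl δ Φ₁ h01 h11 hE1
    have r2 := root_of_unity l hl δ Φ₂ h02 h12 hE2
    have m1 := mid_vanish l δ hl Φ₁ h01 h11 hE1
    have m2 := mid_vanish l δ hl Φ₂ h02 h12 hE2
    have hC12 : Ee l δ (comp Φ₁ Φ₂) = 0 := comp_sol l δ hl Φ₁ Φ₂ h01 h02 hE1 hE2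
    have hC21 : Ee l δ (comp Φ₂ Φ₁) = 0 := comp_sol l δ hl Φ₂ Φ₁ h02 h01 hE2 hE1
    have h0c12 : constantCoeff (comp Φ₁ Φ₂) = 0 := coeff_comp_zero Φ₁ Φ₂ h01
    have h0c21 : constantCoeff (comp Φ₂ Φ₁) = 0 := coeff_comp_zero Φ₂ Φ₁ h02
    have hc1 : coeff 1 (comp Φ₁ Φ₂) = coeff 1 Φ₁ * coeff 1 Φ₂ :=
      coeff_comp_one Φ₁ Φ₂ h01 h02
    have hc1' : coeff 1 (comp Φ₂ Φ₁) = coeff 1 Φ₂ * coeff 1 Φ₁ :=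
      coeff_comp_one Φ₂ Φ₁ h02 h01
    have hl12 := coeff_comp_lp1 l hl Φ₁ Φ₂ h01 h02 m1
    have hl21 := coeff_comp_lp1 l hl Φ₂ Φ₁ h02 h01 m2
    have hpow12 : (coeff 1 (comp Φ₁ Φ₂)) ^ l = 1 := by
      rw [hc1, mul_pow, r1, r2, mul_one]
    ext n
    refine master l hl δ (comp Φ₁ Φ₂) (comp Φ₂ Φ₁) h0c12 h0c21 hC12 hC21 ?_ hpow12 n
      ?_ n le_rfl
    · rw [hc1, hc1']; ring
    · intro n' _ _ hsp
      subst hsp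
      rw [hl12, hl21, pow_succ, pow_succ, r1, r2, one_mul, one_mul]
      ring
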